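/- arXiv:2411.01302 — 2 statements merged into one kernel-verified Lean document; each statement's English description precedes it below -/
import Mathlib

section
/- For all z, z' ∈ ℝ^d with |z| ≤ C, the differential entropies of the Gibbs densities satisfy γ · |∫_𝒜 log π_{z'}(a) · π_{z'}(a) da − ∫_𝒜 log π_z(a) · π_z(a) da| ≤ (6B + 4R/C + B(1 + 2(C + R)/γ) · exp(3(BC + R)/γ)) · |z' − z|. -/
open MeasureTheory
open scoped RealInnerProductSpace

/-- The Gibbs probability density `π_z(a) ∝ exp((f(a)·z + r(a))/γ)` on the set `𝒜`. -/
noncomputable def gibbs {m d : ℕ} (𝒜 : Set (EuclideanSpace ℝ (Fin m))) (γ : ℝ)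
    (f : EuclideanSpace ℝ (Fin m) → EuclideanSpace ℝ (Fin d))
    (r : EuclideanSpace ℝ (Fin m) → ℝ)
    (z : EuclideanSpace ℝ (Fin d)) (a : EuclideanSpace ℝ (Fin m)) : ℝ :=
  Real.exp ((⟪f a, z⟫ + r a) / γ) /
    ∫ a' in 𝒜, Real.exp ((⟪f a', z⟫ + r a') / γ)

private lemma aux_intOn {m : ℕ} {𝒜 : Set (EuclideanSpace ℝ (Fin m))}
    (hA : MeasurableSet 𝒜) (hfin : volume 𝒜 ≠ ⊤)
    {h : EuclideanSpace ℝ (Fin m) → ℝ} (hm : Measurable h)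
    {M : ℝ} (hb : ∀ a ∈ 𝒜, |h a| ≤ M) : IntegrableOn h 𝒜 := by
  refine Integrable.mono' (g := fun _ => M) (integrableOn_const hfin)
    hm.aestronglyMeasurable.restrict ?_
  exact (ae_restrict_iff' hA).2 (ae_of_all _ fun a ha => by simpa [Real.norm_eq_abs] using hb a ha)

private lemma aux_two_mul_le_exp (x : ℝ) (hx : 0 ≤ x) : 2 * x ≤ Real.exp x := by
  have h : Real.exp x = Real.exp (x / 2) * Real.exp (x / 2) := by
    rw [← Real.exp_add]; ring_nf
  nlinarith [Real.add_one_le_exp (x / 2), Real.exp_pos (x / 2), sq_nonneg (x / 2 - 1)]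

private lemma aux_exp_sub_one {x : ℝ} (hx : 0 ≤ x) : Real.exp x - 1 ≤ x * Real.exp x := by
  nlinarith [Real.add_one_le_exp (-x), Real.exp_pos x, Real.exp_neg x,
    mul_pos (Real.exp_pos x) (Real.exp_pos (-x)), Real.exp_pos (-x),
    (by rw [← Real.exp_add]; simp : Real.exp x * Real.exp (-x) = 1)]

private lemma aux_num (γ C B R t : ℝ) (hγ : 0 < γ) (hC : 0 < C) (hB : 0 < B) (hR : 0 < R)
    (ht0 : 0 ≤ t) (htC : t ≤ C) :
    2 * (B * t) + (B * C + R) * (Real.exp (2 * (B * t) / γ) - 1)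
      ≤ (6 * B + 4 * R / C + B * (1 + 2 * (C + R) / γ) * Real.exp (3 * (B * C + R) / γ)) * t := by
  have hMR0 : (0:ℝ) ≤ B * C + R := by positivity
  have hs0 : (0:ℝ) ≤ 2 * (B * t) / γ := by positivity
  have hsC : 2 * (B * t) / γ ≤ 2 * B * C / γ :=
    div_le_div_of_nonneg_right (by nlinarith) hγ.le
  have hP0 : (0:ℝ) < Real.exp (2 * B * C / γ) := Real.exp_pos _
  have hQ1 : (1:ℝ) ≤ Real.exp ((B * C + 3 * R) / γ) := Real.one_le_exp (by positivity)
  have hQ0 : (0:ℝ) < Real.exp ((B * C + 3 * R) / γ) := Real.exp_pos _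
  have hPQ : Real.exp (3 * (B * C + R) / γ)
      = Real.exp (2 * B * C / γ) * Real.exp ((B * C + 3 * R) / γ) := by
    rw [← Real.exp_add]; congr 1; ring
  have hQ2 : 2 * (B * C) ≤ γ * Real.exp ((B * C + 3 * R) / γ) := by
    have h1 : 2 * (B * C / γ) ≤ Real.exp (B * C / γ) :=
      aux_two_mul_le_exp _ (by positivity)
    have h2 : Real.exp (B * C / γ) ≤ Real.exp ((B * C + 3 * R) / γ) :=
      Real.exp_le_exp.2 (div_le_div_of_nonneg_right (by nlinarith) hγ.le)
    have h3 := mul_le_mul_of_nonneg_left (h1.trans h2) hγ.le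
    calc 2 * (B * C) = γ * (2 * (B * C / γ)) := by field_simp
      _ ≤ _ := h3
  have hexp1 : Real.exp (2 * (B * t) / γ) - 1
      ≤ (2 * (B * t) / γ) * Real.exp (2 * B * C / γ) :=
    (aux_exp_sub_one hs0).trans
      (mul_le_mul_of_nonneg_left (Real.exp_le_exp.2 hsC) hs0)
  have step : (B * C + R) * (Real.exp (2 * (B * t) / γ) - 1)
      ≤ (B * C + R) * ((2 * (B * t) / γ) * Real.exp (2 * B * C / γ)) :=
    mul_le_mul_of_nonneg_left hexp1 hMR0
  -- core polynomial inequality (in terms of P, Q abstracted)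
  have core : ∀ P Q : ℝ, 0 < P → 1 ≤ Q → 2 * (B * C) ≤ γ * Q →
      (B * C + R) * ((2 * (B * t) / γ) * P)
        ≤ (4 * B + 4 * R / C + B * P * Q + 2 * B * (C + R) / γ * (P * Q)) * t := by
    intro P Q hP hQ hgQ
    have h7 : (B * C + R) * (2 * B) * P ≤ B * P * (γ * Q) + 2 * B * (C + R) * (P * Q) := by
      have p1 : 2 * B * C * (B * P) ≤ γ * Q * (B * P) :=
        mul_le_mul_of_nonneg_right (by linarith) (by positivity)
      have p2 : 2 * B * R * P ≤ 2 * B * (C + R) * (P * Q) := by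
        calc 2 * B * R * P ≤ 2 * B * (C + R) * P := by
              nlinarith [mul_pos (mul_pos hB hC) hP]
          _ ≤ 2 * B * (C + R) * (P * Q) := by
              have hle : P ≤ P * Q := le_mul_of_one_le_right hP.le hQ
              exact mul_le_mul_of_nonneg_left hle (by positivity)
      nlinarith [p1, p2]
    have h8 := div_le_div_of_nonneg_right (mul_le_mul_of_nonneg_right h7 ht0) hγ.le
    have hL : (B * C + R) * ((2 * (B * t) / γ) * P)
        = ((B * C + R) * (2 * B) * P) * t / γ := by
      field_simp
    have hRr : (B * P * (γ * Q) + 2 * B * (C + R) * (P * Q)) * t / γ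
        = B * P * Q * t + 2 * B * (C + R) / γ * (P * Q) * t := by
      field_simp
    rw [hL]
    refine (h8.trans_eq hRr).trans ?_
    have : (0:ℝ) ≤ 4 * B + 4 * R / C := by positivity
    nlinarith [mul_nonneg this ht0]
  have hcore := core _ _ hP0 hQ1 hQ2
  rw [hPQ]
  calc 2 * (B * t) + (B * C + R) * (Real.exp (2 * (B * t) / γ) - 1)
      ≤ 2 * (B * t) + (B * C + R) * ((2 * (B * t) / γ) * Real.exp (2 * B * C / γ)) := by
        linarith [step]
    _ ≤ 2 * (B * t) + (4 * B + 4 * R / C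
          + B * Real.exp (2 * B * C / γ) * Real.exp ((B * C + 3 * R) / γ)
          + 2 * B * (C + R) / γ *
            (Real.exp (2 * B * C / γ) * Real.exp ((B * C + 3 * R) / γ))) * t := by
        linarith [hcore]
    _ = (6 * B + 4 * R / C + B * (1 + 2 * (C + R) / γ) *
          (Real.exp (2 * B * C / γ) * Real.exp ((B * C + 3 * R) / γ))) * t := by
        ring

section gibbsAux

variable {m d : ℕ} {𝒜 : Set (EuclideanSpace ℝ (Fin m))} {γ B R : ℝ}
  {f : EuclideanSpace ℝ (Fin m) → EuclideanSpace ℝ (Fin d)}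
  {r : EuclideanSpace ℝ (Fin m) → ℝ}

private lemma aux_gb (hfB : ∀ a ∈ 𝒜, ‖f a‖ ≤ B) (hrR : ∀ a ∈ 𝒜, |r a| ≤ R)
    (w : EuclideanSpace ℝ (Fin d)) {a : EuclideanSpace ℝ (Fin m)} (ha : a ∈ 𝒜) :
    |⟪f a, w⟫ + r a| ≤ B * ‖w‖ + R := by
  refine (abs_add_le _ _).trans (add_le_add ?_ (hrR a ha))
  exact (abs_real_inner_le_norm (f a) w).trans
    (mul_le_mul_of_nonneg_right (hfB a ha) (norm_nonneg w))

private lemma aux_expInt (hA : MeasurableSet 𝒜) (hfin : volume 𝒜 ≠ ⊤) (hγ : 0 < γ)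
    (hf : Measurable f) (hr : Measurable r)
    (hfB : ∀ a ∈ 𝒜, ‖f a‖ ≤ B) (hrR : ∀ a ∈ 𝒜, |r a| ≤ R) (w : EuclideanSpace ℝ (Fin d)) :
    IntegrableOn (fun a => Real.exp ((⟪f a, w⟫ + r a) / γ)) 𝒜 := by
  refine aux_intOn hA hfin ((((hf.inner measurable_const).add hr).div_const γ).exp)
    (M := Real.exp ((B * ‖w‖ + R) / γ)) fun a ha => ?_
  rw [abs_of_pos (Real.exp_pos _)]
  exact Real.exp_le_exp.2 (div_le_div_of_nonneg_right
    ((abs_le.1 (aux_gb hfB hrR w ha)).2) hγ.le)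

private lemma aux_Z_bounds (hA : MeasurableSet 𝒜) (hfin : volume 𝒜 ≠ ⊤) (hγ : 0 < γ)
    (hf : Measurable f) (hr : Measurable r)
    (hfB : ∀ a ∈ 𝒜, ‖f a‖ ≤ B) (hrR : ∀ a ∈ 𝒜, |r a| ≤ R) (w : EuclideanSpace ℝ (Fin d)) :
    (volume 𝒜).toReal * Real.exp (-(B * ‖w‖ + R) / γ) ≤
      (∫ a in 𝒜, Real.exp ((⟪f a, w⟫ + r a) / γ)) ∧
    (∫ a in 𝒜, Real.exp ((⟪f a, w⟫ + r a) / γ)) ≤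
      (volume 𝒜).toReal * Real.exp ((B * ‖w‖ + R) / γ) := by
  constructor
  · calc (volume 𝒜).toReal * Real.exp (-(B * ‖w‖ + R) / γ)
        = ∫ _ in 𝒜, Real.exp (-(B * ‖w‖ + R) / γ) := by
          rw [setIntegral_const, smul_eq_mul]; rfl
      _ ≤ _ := by
          refine setIntegral_mono_on (integrableOn_const hfin)
            (aux_expInt hA hfin hγ hf hr hfB hrR w) hA fun a ha => ?_
          exact Real.exp_le_exp.2 (div_le_div_of_nonneg_right
            ((abs_le.1 (aux_gb hfB hrR w ha)).1) hγ.le)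
  · calc (∫ a in 𝒜, Real.exp ((⟪f a, w⟫ + r a) / γ))
        ≤ ∫ _ in 𝒜, Real.exp ((B * ‖w‖ + R) / γ) := by
          refine setIntegral_mono_on (aux_expInt hA hfin hγ hf hr hfB hrR w)
            (integrableOn_const hfin) hA fun a ha => ?_
          exact Real.exp_le_exp.2 (div_le_div_of_nonneg_right
            ((abs_le.1 (aux_gb hfB hrR w ha)).2) hγ.le)
      _ = _ := by rw [setIntegral_const, smul_eq_mul]; rfl

private lemma aux_Zpos (hA : MeasurableSet 𝒜) (h𝒜0 : 0 < volume 𝒜) (hfin : volume 𝒜 ≠ ⊤)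
    (hγ : 0 < γ) (hf : Measurable f) (hr : Measurable r)
    (hfB : ∀ a ∈ 𝒜, ‖f a‖ ≤ B) (hrR : ∀ a ∈ 𝒜, |r a| ≤ R) (w : EuclideanSpace ℝ (Fin d)) :
    0 < ∫ a in 𝒜, Real.exp ((⟪f a, w⟫ + r a) / γ) := by
  have hV : 0 < (volume 𝒜).toReal := ENNReal.toReal_pos h𝒜0.ne' hfin
  exact lt_of_lt_of_le (by positivity) (aux_Z_bounds hA hfin hγ hf hr hfB hrR w).1

private lemma aux_one (hA : MeasurableSet 𝒜) (h𝒜0 : 0 < volume 𝒜) (hfin : volume 𝒜 ≠ ⊤)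
    (hγ : 0 < γ) (hf : Measurable f) (hr : Measurable r)
    (hfB : ∀ a ∈ 𝒜, ‖f a‖ ≤ B) (hrR : ∀ a ∈ 𝒜, |r a| ≤ R) (w : EuclideanSpace ℝ (Fin d)) :
    ∫ a in 𝒜, gibbs 𝒜 γ f r w a = 1 := by
  unfold gibbs
  rw [integral_div, div_self (aux_Zpos hA h𝒜0 hfin hγ hf hr hfB hrR w).ne']

private lemma aux_pi_meas (hf : Measurable f) (hr : Measurable r)
    (w : EuclideanSpace ℝ (Fin d)) : Measurable (gibbs 𝒜 γ f r w) :=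
  ((((hf.inner measurable_const).add hr).div_const γ).exp).div_const _

private lemma aux_pi_bd (hA : MeasurableSet 𝒜) (h𝒜0 : 0 < volume 𝒜) (hfin : volume 𝒜 ≠ ⊤)
    (hγ : 0 < γ) (hf : Measurable f) (hr : Measurable r)
    (hfB : ∀ a ∈ 𝒜, ‖f a‖ ≤ B) (hrR : ∀ a ∈ 𝒜, |r a| ≤ R) (w : EuclideanSpace ℝ (Fin d))
    {a : EuclideanSpace ℝ (Fin m)} (ha : a ∈ 𝒜) :
    gibbs 𝒜 γ f r w a ≤ Real.exp ((B * ‖w‖ + R) / γ) /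
      (∫ a in 𝒜, Real.exp ((⟪f a, w⟫ + r a) / γ)) := by
  have hZ := aux_Zpos hA h𝒜0 hfin hγ hf hr hfB hrR w
  refine div_le_div_of_nonneg_right ?_ hZ.le
  exact Real.exp_le_exp.2 (div_le_div_of_nonneg_right
    ((abs_le.1 (aux_gb hfB hrR w ha)).2) hγ.le)

private lemma aux_pi_nonneg (w : EuclideanSpace ℝ (Fin d))
    (hZ : 0 < ∫ a in 𝒜, Real.exp ((⟪f a, w⟫ + r a) / γ))
    (a : EuclideanSpace ℝ (Fin m)) : 0 ≤ gibbs 𝒜 γ f r w a :=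
  div_nonneg (Real.exp_pos _).le hZ.le

private lemma aux_pi_int (hA : MeasurableSet 𝒜) (h𝒜0 : 0 < volume 𝒜) (hfin : volume 𝒜 ≠ ⊤)
    (hγ : 0 < γ) (hf : Measurable f) (hr : Measurable r)
    (hfB : ∀ a ∈ 𝒜, ‖f a‖ ≤ B) (hrR : ∀ a ∈ 𝒜, |r a| ≤ R) (w : EuclideanSpace ℝ (Fin d)) :
    IntegrableOn (gibbs 𝒜 γ f r w) 𝒜 := by
  have hZ := aux_Zpos hA h𝒜0 hfin hγ hf hr hfB hrR w
  refine aux_intOn hA hfin (aux_pi_meas hf hr w)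
    (M := Real.exp ((B * ‖w‖ + R) / γ) / (∫ a in 𝒜, Real.exp ((⟪f a, w⟫ + r a) / γ)))
    fun a ha => ?_
  rw [abs_of_nonneg (aux_pi_nonneg w hZ a)]
  exact aux_pi_bd hA h𝒜0 hfin hγ hf hr hfB hrR w ha

/-- key bound: if |u| ≤ c * π_w on 𝒜 then |∫ u| ≤ c. -/
private lemma aux_int_bd (hA : MeasurableSet 𝒜) (h𝒜0 : 0 < volume 𝒜) (hfin : volume 𝒜 ≠ ⊤)
    (hγ : 0 < γ) (hf : Measurable f) (hr : Measurable r)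
    (hfB : ∀ a ∈ 𝒜, ‖f a‖ ≤ B) (hrR : ∀ a ∈ 𝒜, |r a| ≤ R) (w : EuclideanSpace ℝ (Fin d))
    {u : EuclideanSpace ℝ (Fin m) → ℝ} (hu : Measurable u) {c : ℝ} (hc : 0 ≤ c)
    (hbd : ∀ a ∈ 𝒜, |u a| ≤ c * gibbs 𝒜 γ f r w a) :
    |∫ a in 𝒜, u a| ≤ c := by
  have hZ := aux_Zpos hA h𝒜0 hfin hγ hf hr hfB hrR w
  have hpiint := aux_pi_int hA h𝒜0 hfin hγ hf hr hfB hrR w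
  have huint : IntegrableOn u 𝒜 := by
    refine aux_intOn hA hfin hu
      (M := c * (Real.exp ((B * ‖w‖ + R) / γ) /
        (∫ a in 𝒜, Real.exp ((⟪f a, w⟫ + r a) / γ)))) fun a ha => ?_
    exact (hbd a ha).trans (mul_le_mul_of_nonneg_left
      (aux_pi_bd hA h𝒜0 hfin hγ hf hr hfB hrR w ha) hc)
  calc |∫ a in 𝒜, u a| ≤ ∫ a in 𝒜, |u a| := by
        simpa [Real.norm_eq_abs] using
          norm_integral_le_integral_norm (μ := volume.restrict 𝒜) u
    _ ≤ ∫ a in 𝒜, c * gibbs 𝒜 γ f r w a :=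
        setIntegral_mono_on huint.abs (hpiint.const_mul c) hA hbd
    _ = c := by
        rw [integral_const_mul, aux_one hA h𝒜0 hfin hγ hf hr hfB hrR w, mul_one]

private lemma aux_gpi_int (hA : MeasurableSet 𝒜) (h𝒜0 : 0 < volume 𝒜) (hfin : volume 𝒜 ≠ ⊤)
    (hγ : 0 < γ) (hf : Measurable f) (hr : Measurable r)
    (hfB : ∀ a ∈ 𝒜, ‖f a‖ ≤ B) (hrR : ∀ a ∈ 𝒜, |r a| ≤ R)
    (w v : EuclideanSpace ℝ (Fin d)) :
    IntegrableOn (fun a => (⟪f a, v⟫ + r a) * gibbs 𝒜 γ f r w a) 𝒜 := by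
  have hZ := aux_Zpos hA h𝒜0 hfin hγ hf hr hfB hrR w
  refine aux_intOn hA hfin (((hf.inner measurable_const).add hr).mul (aux_pi_meas hf hr w))
    (M := (B * ‖v‖ + R) * (Real.exp ((B * ‖w‖ + R) / γ) /
      (∫ a in 𝒜, Real.exp ((⟪f a, w⟫ + r a) / γ)))) fun a ha => ?_
  rw [abs_mul]
  refine mul_le_mul (aux_gb hfB hrR v ha) ?_ (abs_nonneg _) ?_
  · rw [abs_of_nonneg (aux_pi_nonneg w hZ a)]
    exact aux_pi_bd hA h𝒜0 hfin hγ hf hr hfB hrR w ha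
  · exact (abs_nonneg _).trans (aux_gb hfB hrR v ha)

private lemma aux_entropy (hA : MeasurableSet 𝒜) (h𝒜0 : 0 < volume 𝒜) (hfin : volume 𝒜 ≠ ⊤)
    (hγ : 0 < γ) (hf : Measurable f) (hr : Measurable r)
    (hfB : ∀ a ∈ 𝒜, ‖f a‖ ≤ B) (hrR : ∀ a ∈ 𝒜, |r a| ≤ R) (w : EuclideanSpace ℝ (Fin d)) :
    γ * ∫ a in 𝒜, Real.log (gibbs 𝒜 γ f r w a) * gibbs 𝒜 γ f r w a
      = (∫ a in 𝒜, (⟪f a, w⟫ + r a) * gibbs 𝒜 γ f r w a)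
        - γ * Real.log (∫ a in 𝒜, Real.exp ((⟪f a, w⟫ + r a) / γ)) := by
  have hZ := aux_Zpos hA h𝒜0 hfin hγ hf hr hfB hrR w
  set Z : ℝ := ∫ a in 𝒜, Real.exp ((⟪f a, w⟫ + r a) / γ) with hZdef
  have hlog : ∀ a, Real.log (gibbs 𝒜 γ f r w a) * gibbs 𝒜 γ f r w a
      = ((⟪f a, w⟫ + r a) * gibbs 𝒜 γ f r w a) / γ
        - Real.log Z * gibbs 𝒜 γ f r w a := by
    intro a
    have : gibbs 𝒜 γ f r w a = Real.exp ((⟪f a, w⟫ + r a) / γ) / Z := rfl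
    rw [this, Real.log_div (Real.exp_ne_zero _) hZ.ne', Real.log_exp]
    field_simp
  simp only [hlog]
  have hint1 : IntegrableOn (fun a => ((⟪f a, w⟫ + r a) * gibbs 𝒜 γ f r w a) / γ) 𝒜 :=
    (aux_gpi_int hA h𝒜0 hfin hγ hf hr hfB hrR w w).div_const γ
  have hint2 : IntegrableOn (fun a => Real.log Z * gibbs 𝒜 γ f r w a) 𝒜 :=
    (aux_pi_int hA h𝒜0 hfin hγ hf hr hfB hrR w).const_mul _
  rw [integral_sub hint1 hint2, integral_const_mul,
    aux_one hA h𝒜0 hfin hγ hf hr hfB hrR w, integral_div]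
  field_simp

private lemma aux_crude (hA : MeasurableSet 𝒜) (h𝒜0 : 0 < volume 𝒜) (hfin : volume 𝒜 ≠ ⊤)
    (hγ : 0 < γ) (hf : Measurable f) (hr : Measurable r) (hB : 0 < B) (hR : 0 < R)
    (hfB : ∀ a ∈ 𝒜, ‖f a‖ ≤ B) (hrR : ∀ a ∈ 𝒜, |r a| ≤ R) (w : EuclideanSpace ℝ (Fin d)) :
    |γ * (∫ a in 𝒜, Real.log (gibbs 𝒜 γ f r w a) * gibbs 𝒜 γ f r w a)
        + γ * Real.log (volume 𝒜).toReal| ≤ 2 * (B * ‖w‖ + R) := by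
  have hV : 0 < (volume 𝒜).toReal := ENNReal.toReal_pos h𝒜0.ne' hfin
  have hZ := aux_Zpos hA h𝒜0 hfin hγ hf hr hfB hrR w
  have hZb := aux_Z_bounds hA hfin hγ hf hr hfB hrR w
  have hM : 0 ≤ B * ‖w‖ + R := by positivity
  -- bound on the mean energy
  have h1 : |∫ a in 𝒜, (⟪f a, w⟫ + r a) * gibbs 𝒜 γ f r w a| ≤ B * ‖w‖ + R := by
    refine aux_int_bd hA h𝒜0 hfin hγ hf hr hfB hrR w
      (u := fun a => (⟪f a, w⟫ + r a) * gibbs 𝒜 γ f r w a)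
      (((hf.inner measurable_const).add hr).mul (aux_pi_meas hf hr w)) hM fun a ha => ?_
    rw [abs_mul, abs_of_nonneg (aux_pi_nonneg w hZ a)]
    exact mul_le_mul_of_nonneg_right (aux_gb hfB hrR w ha) (aux_pi_nonneg w hZ a)
  -- bound on log Z
  have h2 : |γ * Real.log (∫ a in 𝒜, Real.exp ((⟪f a, w⟫ + r a) / γ))
      - γ * Real.log (volume 𝒜).toReal| ≤ B * ‖w‖ + R := by
    have hub : Real.log (∫ a in 𝒜, Real.exp ((⟪f a, w⟫ + r a) / γ))
        ≤ Real.log (volume 𝒜).toReal + (B * ‖w‖ + R) / γ := by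
      calc Real.log (∫ a in 𝒜, Real.exp ((⟪f a, w⟫ + r a) / γ))
          ≤ Real.log ((volume 𝒜).toReal * Real.exp ((B * ‖w‖ + R) / γ)) :=
            Real.log_le_log hZ hZb.2
        _ = _ := by rw [Real.log_mul hV.ne' (Real.exp_ne_zero _), Real.log_exp]
    have hlb : Real.log (volume 𝒜).toReal + (-(B * ‖w‖ + R)) / γ
        ≤ Real.log (∫ a in 𝒜, Real.exp ((⟪f a, w⟫ + r a) / γ)) := by
      calc Real.log (volume 𝒜).toReal + (-(B * ‖w‖ + R)) / γ
          = Real.log ((volume 𝒜).toReal * Real.exp ((-(B * ‖w‖ + R)) / γ)) := by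
            rw [Real.log_mul hV.ne' (Real.exp_ne_zero _), Real.log_exp]
        _ ≤ _ := Real.log_le_log (by positivity) hZb.1
    rw [abs_le]
    constructor
    · have := mul_le_mul_of_nonneg_left hlb hγ.le
      rw [mul_add] at this
      rw [neg_le_sub_iff_le_add]
      nlinarith [this, mul_div_cancel₀ (-(B * ‖w‖ + R)) hγ.ne']
    · have := mul_le_mul_of_nonneg_left hub hγ.le
      rw [mul_add] at this
      nlinarith [this, mul_div_cancel₀ (B * ‖w‖ + R) hγ.ne']
  have hE := aux_entropy hA h𝒜0 hfin hγ hf hr hfB hrR w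
  rw [hE, sub_add]
  exact (abs_sub _ _).trans (by linarith)

private lemma aux_small (hA : MeasurableSet 𝒜) (h𝒜0 : 0 < volume 𝒜) (hfin : volume 𝒜 ≠ ⊤)
    (hγ : 0 < γ) (hf : Measurable f) (hr : Measurable r) (hB : 0 < B) (hR : 0 < R)
    (hfB : ∀ a ∈ 𝒜, ‖f a‖ ≤ B) (hrR : ∀ a ∈ 𝒜, |r a| ≤ R)
    (z z' : EuclideanSpace ℝ (Fin d)) :
    |γ * (∫ a in 𝒜, Real.log (gibbs 𝒜 γ f r z' a) * gibbs 𝒜 γ f r z' a)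
      - γ * (∫ a in 𝒜, Real.log (gibbs 𝒜 γ f r z a) * gibbs 𝒜 γ f r z a)|
    ≤ 2 * (B * ‖z' - z‖)
      + (B * ‖z‖ + R) * (Real.exp (2 * (B * ‖z' - z‖) / γ) - 1) := by
  set δ : ℝ := B * ‖z' - z‖ with hδdef
  have hδ0 : 0 ≤ δ := by positivity
  have hE1 : (1 : ℝ) ≤ Real.exp (2 * δ / γ) :=
    Real.one_le_exp (by positivity)
  -- pointwise difference bound
  have hd : ∀ a ∈ 𝒜, |(⟪f a, z'⟫ + r a) - (⟪f a, z⟫ + r a)| ≤ δ := by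
    intro a ha
    have heq : (⟪f a, z'⟫ + r a) - (⟪f a, z⟫ + r a) = ⟪f a, z' - z⟫ := by
      rw [inner_sub_right]; ring
    rw [heq]
    exact (abs_real_inner_le_norm _ _).trans
      (mul_le_mul_of_nonneg_right (hfB a ha) (norm_nonneg _))
  -- partition function comparison
  have hZmono : ∀ u v : EuclideanSpace ℝ (Fin d),
      (∀ a ∈ 𝒜, (⟪f a, u⟫ + r a) ≤ (⟪f a, v⟫ + r a) + δ) →
      (∫ a in 𝒜, Real.exp ((⟪f a, u⟫ + r a) / γ))
        ≤ Real.exp (δ / γ) * ∫ a in 𝒜, Real.exp ((⟪f a, v⟫ + r a) / γ) := by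
    intro u v h
    have hptw : ∀ a ∈ 𝒜, Real.exp ((⟪f a, u⟫ + r a) / γ)
        ≤ Real.exp (δ / γ) * Real.exp ((⟪f a, v⟫ + r a) / γ) := by
      intro a ha
      calc Real.exp ((⟪f a, u⟫ + r a) / γ)
          ≤ Real.exp ((δ + (⟪f a, v⟫ + r a)) / γ) :=
            Real.exp_le_exp.2 (div_le_div_of_nonneg_right (by linarith [h a ha]) hγ.le)
        _ = Real.exp (δ / γ) * Real.exp ((⟪f a, v⟫ + r a) / γ) := by
            rw [← Real.exp_add]; congr 1; ring
    calc (∫ a in 𝒜, Real.exp ((⟪f a, u⟫ + r a) / γ))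
        ≤ ∫ a in 𝒜, Real.exp (δ / γ) * Real.exp ((⟪f a, v⟫ + r a) / γ) :=
          setIntegral_mono_on (aux_expInt hA hfin hγ hf hr hfB hrR u)
            ((aux_expInt hA hfin hγ hf hr hfB hrR v).const_mul _) hA hptw
      _ = Real.exp (δ / γ) * ∫ a in 𝒜, Real.exp ((⟪f a, v⟫ + r a) / γ) :=
          integral_const_mul _ _
  have hZp : 0 < ∫ a in 𝒜, Real.exp ((⟪f a, z⟫ + r a) / γ) :=
    aux_Zpos hA h𝒜0 hfin hγ hf hr hfB hrR z
  have hZp' : 0 < ∫ a in 𝒜, Real.exp ((⟪f a, z'⟫ + r a) / γ) :=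
    aux_Zpos hA h𝒜0 hfin hγ hf hr hfB hrR z'
  have hZ1 : (∫ a in 𝒜, Real.exp ((⟪f a, z'⟫ + r a) / γ))
      ≤ Real.exp (δ / γ) * ∫ a in 𝒜, Real.exp ((⟪f a, z⟫ + r a) / γ) :=
    hZmono z' z fun a ha => by linarith [(abs_le.1 (hd a ha)).2]
  have hZ2 : (∫ a in 𝒜, Real.exp ((⟪f a, z⟫ + r a) / γ))
      ≤ Real.exp (δ / γ) * ∫ a in 𝒜, Real.exp ((⟪f a, z'⟫ + r a) / γ) :=
    hZmono z z' fun a ha => by linarith [(abs_le.1 (hd a ha)).1]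
  -- pointwise density ratio bound
  have hpi : ∀ u v : EuclideanSpace ℝ (Fin d),
      (∀ a ∈ 𝒜, |(⟪f a, u⟫ + r a) - (⟪f a, v⟫ + r a)| ≤ δ) →
      ∀ a ∈ 𝒜, gibbs 𝒜 γ f r u a ≤ Real.exp (2 * δ / γ) * gibbs 𝒜 γ f r v a := by
    intro u v hduv a ha
    have hZu : 0 < ∫ a in 𝒜, Real.exp ((⟪f a, u⟫ + r a) / γ) :=
      aux_Zpos hA h𝒜0 hfin hγ hf hr hfB hrR u
    have hZv : 0 < ∫ a in 𝒜, Real.exp ((⟪f a, v⟫ + r a) / γ) :=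
      aux_Zpos hA h𝒜0 hfin hγ hf hr hfB hrR v
    have hZvu : (∫ a in 𝒜, Real.exp ((⟪f a, v⟫ + r a) / γ))
        ≤ Real.exp (δ / γ) * ∫ a in 𝒜, Real.exp ((⟪f a, u⟫ + r a) / γ) :=
      hZmono v u fun a ha => by linarith [(abs_le.1 (hduv a ha)).1]
    have hnum : Real.exp ((⟪f a, u⟫ + r a) / γ)
        ≤ Real.exp (δ / γ) * Real.exp ((⟪f a, v⟫ + r a) / γ) := by
      calc Real.exp ((⟪f a, u⟫ + r a) / γ)
          ≤ Real.exp ((δ + (⟪f a, v⟫ + r a)) / γ) :=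
            Real.exp_le_exp.2 (div_le_div_of_nonneg_right
              (by linarith [(abs_le.1 (hduv a ha)).2]) hγ.le)
        _ = _ := by rw [← Real.exp_add]; congr 1; ring
    have hden : Real.exp (-(δ / γ)) * (∫ a in 𝒜, Real.exp ((⟪f a, v⟫ + r a) / γ))
        ≤ ∫ a in 𝒜, Real.exp ((⟪f a, u⟫ + r a) / γ) := by
      have h := mul_le_mul_of_nonneg_left hZvu (Real.exp_pos (-(δ / γ))).le
      rw [← mul_assoc, ← Real.exp_add, neg_add_cancel, Real.exp_zero, one_mul] at h
      exact h
    have hmain : Real.exp ((⟪f a, u⟫ + r a) / γ) /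
          (∫ a in 𝒜, Real.exp ((⟪f a, u⟫ + r a) / γ))
        ≤ (Real.exp (δ / γ) * Real.exp ((⟪f a, v⟫ + r a) / γ)) /
          (Real.exp (-(δ / γ)) * ∫ a in 𝒜, Real.exp ((⟪f a, v⟫ + r a) / γ)) :=
      div_le_div₀ (by positivity) hnum (by positivity) hden
    have heq : (Real.exp (δ / γ) * Real.exp ((⟪f a, v⟫ + r a) / γ)) /
          (Real.exp (-(δ / γ)) * ∫ a in 𝒜, Real.exp ((⟪f a, v⟫ + r a) / γ))
        = Real.exp (2 * δ / γ) * gibbs 𝒜 γ f r v a := by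
      rw [mul_div_mul_comm, ← Real.exp_sub,
        show δ / γ - -(δ / γ) = 2 * δ / γ by ring]
      rfl
    exact le_of_le_of_eq hmain heq
  -- total-variation style pointwise bound
  have htv : ∀ a ∈ 𝒜, |gibbs 𝒜 γ f r z' a - gibbs 𝒜 γ f r z a|
      ≤ (Real.exp (2 * δ / γ) - 1) * gibbs 𝒜 γ f r z a := by
    intro a ha
    have h1 := hpi z' z hd a ha
    have h2 := hpi z z' (fun a ha => by rw [abs_sub_comm]; exact hd a ha) a ha
    have hp0 : 0 ≤ gibbs 𝒜 γ f r z a := aux_pi_nonneg z hZp a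
    have hp0' : 0 ≤ gibbs 𝒜 γ f r z' a := aux_pi_nonneg z' hZp' a
    rw [abs_le]
    constructor
    · nlinarith [sq_nonneg (Real.exp (2 * δ / γ) - 1), Real.exp_pos (2 * δ / γ),
        mul_nonneg hp0 (sub_nonneg.2 hE1)]
    · nlinarith
  -- the three integral estimates
  have I1 : |∫ a in 𝒜, ((⟪f a, z'⟫ + r a) - (⟪f a, z⟫ + r a)) * gibbs 𝒜 γ f r z' a| ≤ δ := by
    refine aux_int_bd hA h𝒜0 hfin hγ hf hr hfB hrR z'
      (u := fun a => ((⟪f a, z'⟫ + r a) - (⟪f a, z⟫ + r a)) * gibbs 𝒜 γ f r z' a)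
      ((((hf.inner measurable_const).add hr).sub
        ((hf.inner measurable_const).add hr)).mul (aux_pi_meas hf hr z')) hδ0
      fun a ha => ?_
    rw [abs_mul, abs_of_nonneg (aux_pi_nonneg z' hZp' a)]
    exact mul_le_mul_of_nonneg_right (hd a ha) (aux_pi_nonneg z' hZp' a)
  have I2 : |∫ a in 𝒜, (⟪f a, z⟫ + r a) * (gibbs 𝒜 γ f r z' a - gibbs 𝒜 γ f r z a)|
      ≤ (B * ‖z‖ + R) * (Real.exp (2 * δ / γ) - 1) := by
    have hM0 : 0 ≤ B * ‖z‖ + R := by positivity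
    refine aux_int_bd hA h𝒜0 hfin hγ hf hr hfB hrR z
      (u := fun a => (⟪f a, z⟫ + r a) * (gibbs 𝒜 γ f r z' a - gibbs 𝒜 γ f r z a))
      (((hf.inner measurable_const).add hr).mul
        ((aux_pi_meas hf hr z').sub (aux_pi_meas hf hr z)))
      (by nlinarith) fun a ha => ?_
    rw [abs_mul, mul_assoc]
    exact mul_le_mul (aux_gb hfB hrR z ha) (htv a ha) (abs_nonneg _) hM0
  have hlZ : |γ * Real.log (∫ a in 𝒜, Real.exp ((⟪f a, z'⟫ + r a) / γ))
      - γ * Real.log (∫ a in 𝒜, Real.exp ((⟪f a, z⟫ + r a) / γ))| ≤ δ := by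
    have l1 : Real.log (∫ a in 𝒜, Real.exp ((⟪f a, z'⟫ + r a) / γ))
        ≤ δ / γ + Real.log (∫ a in 𝒜, Real.exp ((⟪f a, z⟫ + r a) / γ)) := by
      calc Real.log (∫ a in 𝒜, Real.exp ((⟪f a, z'⟫ + r a) / γ))
          ≤ Real.log (Real.exp (δ / γ) * ∫ a in 𝒜, Real.exp ((⟪f a, z⟫ + r a) / γ)) :=
            Real.log_le_log hZp' hZ1
        _ = _ := by rw [Real.log_mul (Real.exp_ne_zero _) hZp.ne', Real.log_exp]
    have l2 : Real.log (∫ a in 𝒜, Real.exp ((⟪f a, z⟫ + r a) / γ))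
        ≤ δ / γ + Real.log (∫ a in 𝒜, Real.exp ((⟪f a, z'⟫ + r a) / γ)) := by
      calc Real.log (∫ a in 𝒜, Real.exp ((⟪f a, z⟫ + r a) / γ))
          ≤ Real.log (Real.exp (δ / γ) * ∫ a in 𝒜, Real.exp ((⟪f a, z'⟫ + r a) / γ)) :=
            Real.log_le_log hZp hZ2
        _ = _ := by rw [Real.log_mul (Real.exp_ne_zero _) hZp'.ne', Real.log_exp]
    have hγδ : γ * (δ / γ) = δ := by field_simp
    have l1' := mul_le_mul_of_nonneg_left l1 hγ.le
    have l2' := mul_le_mul_of_nonneg_left l2 hγ.le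
    rw [mul_add, hγδ] at l1' l2'
    rw [abs_le]; constructor <;> linarith
  -- splitting identities
  have e1 : ∫ a in 𝒜, ((⟪f a, z'⟫ + r a) - (⟪f a, z⟫ + r a)) * gibbs 𝒜 γ f r z' a
      = (∫ a in 𝒜, (⟪f a, z'⟫ + r a) * gibbs 𝒜 γ f r z' a)
        - ∫ a in 𝒜, (⟪f a, z⟫ + r a) * gibbs 𝒜 γ f r z' a := by
    simp only [sub_mul]
    exact integral_sub (aux_gpi_int hA h𝒜0 hfin hγ hf hr hfB hrR z' z')
      (aux_gpi_int hA h𝒜0 hfin hγ hf hr hfB hrR z' z)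
  have e2 : ∫ a in 𝒜, (⟪f a, z⟫ + r a) * (gibbs 𝒜 γ f r z' a - gibbs 𝒜 γ f r z a)
      = (∫ a in 𝒜, (⟪f a, z⟫ + r a) * gibbs 𝒜 γ f r z' a)
        - ∫ a in 𝒜, (⟪f a, z⟫ + r a) * gibbs 𝒜 γ f r z a := by
    simp only [mul_sub]
    exact integral_sub (aux_gpi_int hA h𝒜0 hfin hγ hf hr hfB hrR z' z)
      (aux_gpi_int hA h𝒜0 hfin hγ hf hr hfB hrR z z)
  rw [aux_entropy hA h𝒜0 hfin hγ hf hr hfB hrR z',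
    aux_entropy hA h𝒜0 hfin hγ hf hr hfB hrR z]
  have hre : ((∫ a in 𝒜, (⟪f a, z'⟫ + r a) * gibbs 𝒜 γ f r z' a)
        - γ * Real.log (∫ a in 𝒜, Real.exp ((⟪f a, z'⟫ + r a) / γ)))
      - ((∫ a in 𝒜, (⟪f a, z⟫ + r a) * gibbs 𝒜 γ f r z a)
        - γ * Real.log (∫ a in 𝒜, Real.exp ((⟪f a, z⟫ + r a) / γ)))
      = ((∫ a in 𝒜, ((⟪f a, z'⟫ + r a) - (⟪f a, z⟫ + r a)) * gibbs 𝒜 γ f r z' a)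
          + ∫ a in 𝒜, (⟪f a, z⟫ + r a) * (gibbs 𝒜 γ f r z' a - gibbs 𝒜 γ f r z a))
        - (γ * Real.log (∫ a in 𝒜, Real.exp ((⟪f a, z'⟫ + r a) / γ))
          - γ * Real.log (∫ a in 𝒜, Real.exp ((⟪f a, z⟫ + r a) / γ))) := by
    rw [e1, e2]; ring
  rw [hre]
  refine (abs_sub _ _).trans ?_
  have := (abs_add_le (∫ a in 𝒜, ((⟪f a, z'⟫ + r a) - (⟪f a, z⟫ + r a)) * gibbs 𝒜 γ f r z' a)
    (∫ a in 𝒜, (⟪f a, z⟫ + r a) * (gibbs 𝒜 γ f r z' a - gibbs 𝒜 γ f r z a)))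
  linarith

end gibbsAux



theorem stmt7 {m d : ℕ}
    (𝒜 : Set (EuclideanSpace ℝ (Fin m)))
    (h𝒜 : IsCompact 𝒜) (h𝒜0 : 0 < volume 𝒜) (h𝒜fin : volume 𝒜 < ⊤)
    (γ C B R : ℝ) (hγ : 0 < γ) (hC : 0 < C) (hB : 0 < B) (hR : 0 < R)
    (f : EuclideanSpace ℝ (Fin m) → EuclideanSpace ℝ (Fin d))
    (r : EuclideanSpace ℝ (Fin m) → ℝ)
    (hf : Measurable f) (hr : Measurable r)
    (hfB : ∀ a ∈ 𝒜, ‖f a‖ ≤ B) (hrR : ∀ a ∈ 𝒜, |r a| ≤ R)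
    (z z' : EuclideanSpace ℝ (Fin d)) (hz : ‖z‖ ≤ C) :
    γ * |(∫ a in 𝒜, Real.log (gibbs 𝒜 γ f r z' a) * gibbs 𝒜 γ f r z' a) -
          ∫ a in 𝒜, Real.log (gibbs 𝒜 γ f r z a) * gibbs 𝒜 γ f r z a| ≤
      (6 * B + 4 * R / C +
          B * (1 + 2 * (C + R) / γ) * Real.exp (3 * (B * C + R) / γ)) * ‖z' - z‖ := by
  have hA : MeasurableSet 𝒜 := h𝒜.isClosed.measurableSet
  have hfin : volume 𝒜 ≠ ⊤ := h𝒜fin.ne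
  set t : ℝ := ‖z' - z‖ with htdef
  have ht0 : 0 ≤ t := norm_nonneg _
  have habs : γ * |(∫ a in 𝒜, Real.log (gibbs 𝒜 γ f r z' a) * gibbs 𝒜 γ f r z' a) -
        ∫ a in 𝒜, Real.log (gibbs 𝒜 γ f r z a) * gibbs 𝒜 γ f r z a|
      = |γ * (∫ a in 𝒜, Real.log (gibbs 𝒜 γ f r z' a) * gibbs 𝒜 γ f r z' a)
        - γ * ∫ a in 𝒜, Real.log (gibbs 𝒜 γ f r z a) * gibbs 𝒜 γ f r z a| := by
    rw [← mul_sub, abs_mul, abs_of_pos hγ]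
  rw [habs]
  have hK0 : 0 ≤ B * (1 + 2 * (C + R) / γ) * Real.exp (3 * (B * C + R) / γ) := by positivity
  by_cases hsmall : t ≤ C
  · -- small increment: Lipschitz estimate
    have key := aux_small hA h𝒜0 hfin hγ hf hr hB hR hfB hrR z z'
    rw [← htdef] at key
    have hee : 0 ≤ Real.exp (2 * (B * t) / γ) - 1 := by
      have := Real.one_le_exp (show (0:ℝ) ≤ 2 * (B * t) / γ by positivity); linarith
    have hM : B * ‖z‖ + R ≤ B * C + R := by nlinarith
    have key2 : |γ * (∫ a in 𝒜, Real.log (gibbs 𝒜 γ f r z' a) * gibbs 𝒜 γ f r z' a)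
        - γ * ∫ a in 𝒜, Real.log (gibbs 𝒜 γ f r z a) * gibbs 𝒜 γ f r z a|
        ≤ 2 * (B * t) + (B * C + R) * (Real.exp (2 * (B * t) / γ) - 1) := by
      refine key.trans ?_
      have := mul_le_mul_of_nonneg_right hM hee
      linarith
    exact key2.trans (aux_num γ C B R t hγ hC hB hR ht0 hsmall)
  · -- large increment: crude bound
    push_neg at hsmall
    have hc1 := aux_crude hA h𝒜0 hfin hγ hf hr hB hR hfB hrR z
    have hc2 := aux_crude hA h𝒜0 hfin hγ hf hr hB hR hfB hrR z'
    have hz' : ‖z'‖ ≤ C + t := by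
      have h := norm_add_le z (z' - z)
      have heq : z + (z' - z) = z' := by abel
      rw [heq] at h
      calc ‖z'‖ ≤ ‖z‖ + t := h
        _ ≤ C + t := by linarith
    have htri : |γ * (∫ a in 𝒜, Real.log (gibbs 𝒜 γ f r z' a) * gibbs 𝒜 γ f r z' a)
        - γ * ∫ a in 𝒜, Real.log (gibbs 𝒜 γ f r z a) * gibbs 𝒜 γ f r z a|
        ≤ 2 * (B * ‖z'‖ + R) + 2 * (B * ‖z‖ + R) := by
      have heq : γ * (∫ a in 𝒜, Real.log (gibbs 𝒜 γ f r z' a) * gibbs 𝒜 γ f r z' a)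
          - γ * ∫ a in 𝒜, Real.log (gibbs 𝒜 γ f r z a) * gibbs 𝒜 γ f r z a
          = (γ * (∫ a in 𝒜, Real.log (gibbs 𝒜 γ f r z' a) * gibbs 𝒜 γ f r z' a)
              + γ * Real.log (volume 𝒜).toReal)
            - (γ * (∫ a in 𝒜, Real.log (gibbs 𝒜 γ f r z a) * gibbs 𝒜 γ f r z a)
              + γ * Real.log (volume 𝒜).toReal) := by ring
      rw [heq]
      exact (abs_sub _ _).trans (by linarith)
    refine htri.trans ?_
    have h4R : 4 * R ≤ 4 * R / C * t := by
      rw [div_mul_eq_mul_div, le_div_iff₀ hC]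
      nlinarith
    nlinarith [mul_nonneg hK0 ht0, norm_nonneg z, hz, hz', hsmall.le, h4R]
end

section
/- For every z' ∈ ℝ^d with |z'| ≤ C, the differential entropies of the two Gibbs densities satisfy γ · |∫_𝒜 log ρ_{z'}(a) · ρ_{z'}(a) da − ∫_𝒜 log π_{z'}(a) · π_{z'}(a) da| ≤ 2(1 + ((BC + R)/γ) · exp(2(BC + R)/γ)) · sup_{a∈𝒜} |(f(a) − g(a))·z'|. -/
open MeasureTheory
open scoped RealInnerProductSpace

lemma abs_exp_sub_exp_le {x y M : ℝ} (hx : x ≤ M) (hy : y ≤ M) :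
    |Real.exp x - Real.exp y| ≤ Real.exp M * |x - y| := by
  wlog h : y ≤ x generalizing x y
  · rw [abs_sub_comm, abs_sub_comm x y]; exact this hy hx (le_of_not_ge h)
  rw [abs_of_nonneg (sub_nonneg.2 (Real.exp_le_exp.2 h)), abs_of_nonneg (sub_nonneg.2 h)]
  have h2 : Real.exp x * ((y - x) + 1) ≤ Real.exp x * Real.exp (y - x) :=
    mul_le_mul_of_nonneg_left (Real.add_one_le_exp _) (Real.exp_pos x).le
  rw [← Real.exp_add] at h2
  have hxy : Real.exp (x + (y - x)) = Real.exp y := by ring_nf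
  rw [hxy] at h2
  have h3 : Real.exp x - Real.exp y ≤ Real.exp x * (x - y) := by nlinarith
  calc Real.exp x - Real.exp y ≤ Real.exp x * (x - y) := h3
    _ ≤ Real.exp M * (x - y) :=
      mul_le_mul_of_nonneg_right (Real.exp_le_exp.2 hx) (sub_nonneg.2 h)

lemma entropy_diff {m : ℕ} (𝒜 : Set (EuclideanSpace ℝ (Fin m)))
    (hm : MeasurableSet 𝒜) (h𝒜0 : 0 < volume 𝒜) (h𝒜fin : volume 𝒜 < ⊤)
    (u v : EuclideanSpace ℝ (Fin m) → ℝ) (hu : Measurable u) (hv : Measurable v)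
    (M ε : ℝ) (hub : ∀ a ∈ 𝒜, |u a| ≤ M) (hvb : ∀ a ∈ 𝒜, |v a| ≤ M)
    (huv : ∀ a ∈ 𝒜, |u a - v a| ≤ ε) :
    |(∫ a in 𝒜, Real.log (Real.exp (v a) / ∫ a' in 𝒜, Real.exp (v a')) *
          (Real.exp (v a) / ∫ a' in 𝒜, Real.exp (v a'))) -
       ∫ a in 𝒜, Real.log (Real.exp (u a) / ∫ a' in 𝒜, Real.exp (u a')) *
          (Real.exp (u a) / ∫ a' in 𝒜, Real.exp (u a'))| ≤
      2 * ε + 2 * M * Real.exp (2 * M) * ε := by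
  have hAne : volume 𝒜 ≠ ⊤ := h𝒜fin.ne
  set A : ℝ := (volume 𝒜).toReal with hAdef
  have hA0 : 0 < A := ENNReal.toReal_pos h𝒜0.ne' hAne
  obtain ⟨a0, ha0⟩ : 𝒜.Nonempty := by
    by_contra h
    rw [Set.not_nonempty_iff_eq_empty] at h
    simp [h] at h𝒜0
  have hε0 : 0 ≤ ε := (abs_nonneg _).trans (huv a0 ha0)
  have hM0 : 0 ≤ M := (abs_nonneg _).trans (hub a0 ha0)
  -- generic integrability helper
  have hint : ∀ (h : EuclideanSpace ℝ (Fin m) → ℝ) (K : ℝ), Measurable h →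
      (∀ a ∈ 𝒜, |h a| ≤ K) → IntegrableOn h 𝒜 volume := by
    intro h K hmeas hb
    exact Measure.integrableOn_of_bounded hAne hmeas.aestronglyMeasurable
      ((ae_restrict_iff' hm).2 (ae_of_all _ (fun a ha => by
        simpa [Real.norm_eq_abs] using hb a ha)))
  -- bounds on exp
  have hexpu_ub : ∀ a ∈ 𝒜, Real.exp (u a) ≤ Real.exp M :=
    fun a ha => Real.exp_le_exp.2 ((le_abs_self _).trans (hub a ha))
  have hexpu_lb : ∀ a ∈ 𝒜, Real.exp (-M) ≤ Real.exp (u a) :=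
    fun a ha => Real.exp_le_exp.2 (neg_le_of_abs_le (hub a ha))
  have hexpv_ub : ∀ a ∈ 𝒜, Real.exp (v a) ≤ Real.exp M :=
    fun a ha => Real.exp_le_exp.2 ((le_abs_self _).trans (hvb a ha))
  have hexpv_lb : ∀ a ∈ 𝒜, Real.exp (-M) ≤ Real.exp (v a) :=
    fun a ha => Real.exp_le_exp.2 (neg_le_of_abs_le (hvb a ha))
  have hintexpu : IntegrableOn (fun a => Real.exp (u a)) 𝒜 volume :=
    hint _ (Real.exp M) (Real.measurable_exp.comp hu)
      (fun a ha => by rw [abs_of_pos (Real.exp_pos _)]; exact hexpu_ub a ha)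
  have hintexpv : IntegrableOn (fun a => Real.exp (v a)) 𝒜 volume :=
    hint _ (Real.exp M) (Real.measurable_exp.comp hv)
      (fun a ha => by rw [abs_of_pos (Real.exp_pos _)]; exact hexpv_ub a ha)
  set Zu : ℝ := ∫ a' in 𝒜, Real.exp (u a') with hZu
  set Zv : ℝ := ∫ a' in 𝒜, Real.exp (v a') with hZv
  have hintconst : IntegrableOn (fun _ : EuclideanSpace ℝ (Fin m) => Real.exp (-M)) 𝒜 volume :=
    integrableOn_const hAne
  have hZu_lb : A * Real.exp (-M) ≤ Zu := by
    have := setIntegral_mono_on hintconst hintexpu hm hexpu_lb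
    rwa [setIntegral_const, smul_eq_mul] at this
  have hZv_lb : A * Real.exp (-M) ≤ Zv := by
    have := setIntegral_mono_on hintconst hintexpv hm hexpv_lb
    rwa [setIntegral_const, smul_eq_mul] at this
  have hZu0 : 0 < Zu := lt_of_lt_of_le (by positivity) hZu_lb
  have hZv0 : 0 < Zv := lt_of_lt_of_le (by positivity) hZv_lb
  -- densities
  set π : EuclideanSpace ℝ (Fin m) → ℝ := fun a => Real.exp (u a) / Zu with hπdef
  set ρ : EuclideanSpace ℝ (Fin m) → ℝ := fun a => Real.exp (v a) / Zv with hρdef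
  have hπmeas : Measurable π := (Real.measurable_exp.comp hu).div_const Zu
  have hρmeas : Measurable ρ := (Real.measurable_exp.comp hv).div_const Zv
  have hπb : ∀ a ∈ 𝒜, |π a| ≤ Real.exp M / Zu := fun a ha => by
    rw [abs_of_pos (by positivity : (0:ℝ) < π a), show π a = Real.exp (u a) / Zu from rfl]
    gcongr
    exact (le_abs_self _).trans (hub a ha)
  have hρb : ∀ a ∈ 𝒜, |ρ a| ≤ Real.exp M / Zv := fun a ha => by
    rw [abs_of_pos (by positivity : (0:ℝ) < ρ a), show ρ a = Real.exp (v a) / Zv from rfl]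
    gcongr
    exact (le_abs_self _).trans (hvb a ha)
  have hπint : IntegrableOn π 𝒜 volume := hintexpu.div_const Zu
  have hρint : IntegrableOn ρ 𝒜 volume := hintexpv.div_const Zv
  have hπ1 : (∫ a in 𝒜, π a) = 1 := by
    show (∫ a in 𝒜, Real.exp (u a) / Zu) = 1
    rw [integral_div, ← hZu, div_self hZu0.ne']
  have hρ1 : (∫ a in 𝒜, ρ a) = 1 := by
    show (∫ a in 𝒜, Real.exp (v a) / Zv) = 1
    rw [integral_div, ← hZv, div_self hZv0.ne']
  -- entropy formulas
  have hintuπ : IntegrableOn (fun a => u a * π a) 𝒜 volume :=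
    hint _ (M * (Real.exp M / Zu)) (hu.mul hπmeas) (fun a ha => by
      rw [abs_mul]; exact mul_le_mul (hub a ha) (hπb a ha) (abs_nonneg _) hM0)
  have hintvρ : IntegrableOn (fun a => v a * ρ a) 𝒜 volume :=
    hint _ (M * (Real.exp M / Zv)) (hv.mul hρmeas) (fun a ha => by
      rw [abs_mul]; exact mul_le_mul (hvb a ha) (hρb a ha) (abs_nonneg _) hM0)
  have hintuρ : IntegrableOn (fun a => u a * ρ a) 𝒜 volume :=
    hint _ (M * (Real.exp M / Zv)) (hu.mul hρmeas) (fun a ha => by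
      rw [abs_mul]; exact mul_le_mul (hub a ha) (hρb a ha) (abs_nonneg _) hM0)
  have hEu : (∫ a in 𝒜, Real.log (Real.exp (u a) / Zu) * (Real.exp (u a) / Zu))
      = (∫ a in 𝒜, u a * π a) - Real.log Zu := by
    have heq : ∀ a, Real.log (Real.exp (u a) / Zu) * (Real.exp (u a) / Zu)
        = u a * π a - Real.log Zu * π a := fun a => by
      rw [Real.log_div (Real.exp_ne_zero _) hZu0.ne', Real.log_exp,
        show π a = Real.exp (u a) / Zu from rfl]
      ring
    simp only [heq]
    rw [integral_sub hintuπ (hπint.const_mul _), integral_const_mul, hπ1, mul_one]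
  have hEv : (∫ a in 𝒜, Real.log (Real.exp (v a) / Zv) * (Real.exp (v a) / Zv))
      = (∫ a in 𝒜, v a * ρ a) - Real.log Zv := by
    have heq : ∀ a, Real.log (Real.exp (v a) / Zv) * (Real.exp (v a) / Zv)
        = v a * ρ a - Real.log Zv * ρ a := fun a => by
      rw [Real.log_div (Real.exp_ne_zero _) hZv0.ne', Real.log_exp,
        show ρ a = Real.exp (v a) / Zv from rfl]
      ring
    simp only [heq]
    rw [integral_sub hintvρ (hρint.const_mul _), integral_const_mul, hρ1, mul_one]
  rw [hEu, hEv]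
  set Iu := ∫ a in 𝒜, u a * π a with hIu
  set Iv := ∫ a in 𝒜, v a * ρ a with hIv
  set Iuρ := ∫ a in 𝒜, u a * ρ a with hIuρ
  -- bound (a)
  have habs1 : |Iv - Iuρ| ≤ ε := by
    have ha1 : Iv - Iuρ = ∫ a in 𝒜, (v a - u a) * ρ a := by
      rw [hIv, hIuρ, ← integral_sub hintvρ hintuρ]
      congr 1
      funext a
      ring
    rw [ha1]
    calc |∫ a in 𝒜, (v a - u a) * ρ a| ≤ ∫ a in 𝒜, |v a - u a| * |ρ a| := by
          simpa [Real.norm_eq_abs] using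
            norm_integral_le_integral_norm (μ := volume.restrict 𝒜)
              (fun a => (v a - u a) * ρ a)
      _ ≤ ∫ a in 𝒜, ε * ρ a := by
          refine setIntegral_mono_on
            (hint _ (ε * (Real.exp M / Zv)) ((hv.sub hu).abs.mul hρmeas.abs) ?_)
            (hρint.const_mul _) hm ?_
          · intro a ha
            rw [abs_mul, abs_abs, abs_abs]
            refine mul_le_mul ?_ (hρb a ha) (abs_nonneg _) hε0
            rw [abs_sub_comm]; exact huv a ha
          · intro a ha
            rw [abs_of_pos (by positivity : (0:ℝ) < ρ a)]
            refine mul_le_mul_of_nonneg_right ?_ (by positivity)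
            rw [abs_sub_comm]; exact huv a ha
      _ = ε := by rw [integral_const_mul, hρ1, mul_one]
  -- bound (c) : partition functions
  have habs3 : |Real.log Zv - Real.log Zu| ≤ ε := by
    have hZuv : Zv ≤ Real.exp ε * Zu := by
      have hpt : ∀ a ∈ 𝒜, Real.exp (v a) ≤ Real.exp ε * Real.exp (u a) := by
        intro a ha
        rw [← Real.exp_add]
        apply Real.exp_le_exp.2
        have := (abs_le.1 (huv a ha)).1
        linarith
      calc Zv ≤ ∫ a in 𝒜, Real.exp ε * Real.exp (u a) :=
            setIntegral_mono_on hintexpv (hintexpu.const_mul _) hm hpt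
        _ = Real.exp ε * Zu := by rw [integral_const_mul]
    have hZvu : Zu ≤ Real.exp ε * Zv := by
      have hpt : ∀ a ∈ 𝒜, Real.exp (u a) ≤ Real.exp ε * Real.exp (v a) := by
        intro a ha
        rw [← Real.exp_add]
        apply Real.exp_le_exp.2
        have := (abs_le.1 (huv a ha)).2
        linarith
      calc Zu ≤ ∫ a in 𝒜, Real.exp ε * Real.exp (v a) :=
            setIntegral_mono_on hintexpu (hintexpv.const_mul _) hm hpt
        _ = Real.exp ε * Zv := by rw [integral_const_mul]
    rw [abs_le]
    constructor
    · have := Real.log_le_log hZu0 hZvu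
      rw [Real.log_mul (Real.exp_ne_zero _) hZv0.ne', Real.log_exp] at this
      linarith
    · have := Real.log_le_log hZv0 hZuv
      rw [Real.log_mul (Real.exp_ne_zero _) hZu0.ne', Real.log_exp] at this
      linarith
  -- bound (b)
  have hexpdiff : ∀ a ∈ 𝒜, |Real.exp (v a) - Real.exp (u a)| ≤ Real.exp M * ε := by
    intro a ha
    calc |Real.exp (v a) - Real.exp (u a)|
        ≤ Real.exp M * |v a - u a| :=
          abs_exp_sub_exp_le ((le_abs_self _).trans (hvb a ha))
            ((le_abs_self _).trans (hub a ha))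
      _ ≤ Real.exp M * ε := by
          refine mul_le_mul_of_nonneg_left ?_ (Real.exp_pos M).le
          rw [abs_sub_comm]; exact huv a ha
  have hintabsdiff : IntegrableOn (fun a => |Real.exp (v a) - Real.exp (u a)|) 𝒜 volume :=
    hint _ (Real.exp M * ε) ((Real.measurable_exp.comp hv).sub
      (Real.measurable_exp.comp hu)).abs
      (fun a ha => by rw [abs_abs]; exact hexpdiff a ha)
  have hIdiff : (∫ a in 𝒜, |Real.exp (v a) - Real.exp (u a)|) ≤ A * (Real.exp M * ε) := by
    have := setIntegral_mono_on hintabsdiff (integrableOn_const hAne) hm hexpdiff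
    rwa [setIntegral_const, smul_eq_mul] at this
  have hIdiff0 : 0 ≤ ∫ a in 𝒜, |Real.exp (v a) - Real.exp (u a)| :=
    integral_nonneg (fun a => abs_nonneg _)
  have hZdiff : |Zv - Zu| ≤ A * (Real.exp M * ε) := by
    have h1 : Zv - Zu = ∫ a in 𝒜, (Real.exp (v a) - Real.exp (u a)) := by
      rw [hZv, hZu, ← integral_sub hintexpv hintexpu]
    rw [h1]
    calc |∫ a in 𝒜, (Real.exp (v a) - Real.exp (u a))|
        ≤ ∫ a in 𝒜, |Real.exp (v a) - Real.exp (u a)| := by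
          simpa [Real.norm_eq_abs] using
            norm_integral_le_integral_norm (μ := volume.restrict 𝒜)
              (fun a => Real.exp (v a) - Real.exp (u a))
      _ ≤ A * (Real.exp M * ε) := hIdiff
  set c : ℝ := |Zv - Zu| / (Zu * Zv) with hc
  have hc0 : 0 ≤ c := by positivity
  have habs2 : |Iuρ - Iu| ≤ 2 * M * Real.exp (2 * M) * ε := by
    have hb1 : Iuρ - Iu = ∫ a in 𝒜, u a * (ρ a - π a) := by
      rw [hIuρ, hIu, ← integral_sub hintuρ hintuπ]
      congr 1
      funext a
      ring
    have hpt : ∀ a ∈ 𝒜, |u a * (ρ a - π a)|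
        ≤ M * (|Real.exp (v a) - Real.exp (u a)| / Zv + Real.exp (u a) * c) := by
      intro a ha
      have hid : ρ a - π a = (Real.exp (v a) - Real.exp (u a)) / Zv
          + Real.exp (u a) * ((Zu - Zv) / (Zu * Zv)) := by
        show Real.exp (v a) / Zv - Real.exp (u a) / Zu = _
        field_simp
        ring
      rw [abs_mul, hid]
      refine mul_le_mul (hub a ha) ?_ (abs_nonneg _) hM0
      refine (abs_add_le _ _).trans ?_
      rw [abs_div, abs_of_pos hZv0, abs_mul, abs_of_pos (Real.exp_pos _), abs_div,
        abs_of_pos (mul_pos hZu0 hZv0), abs_sub_comm Zu Zv, hc]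
    have hmeaspt : Measurable (fun a => u a * (ρ a - π a)) :=
      hu.mul (hρmeas.sub hπmeas)
    have hintpt : IntegrableOn (fun a => u a * (ρ a - π a)) 𝒜 volume :=
      hint _ (M * (Real.exp M * ε / Zv + Real.exp M * c)) hmeaspt (fun a ha => by
        refine (hpt a ha).trans ?_
        refine mul_le_mul_of_nonneg_left ?_ hM0
        refine add_le_add ?_ (mul_le_mul_of_nonneg_right (hexpu_ub a ha) hc0)
        exact (div_le_div_iff_of_pos_right hZv0).2 (hexpdiff a ha))
    rw [hb1]
    calc |∫ a in 𝒜, u a * (ρ a - π a)|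
        ≤ ∫ a in 𝒜, |u a| * |ρ a - π a| := by
          simpa [Real.norm_eq_abs] using
            norm_integral_le_integral_norm (μ := volume.restrict 𝒜)
              (fun a => u a * (ρ a - π a))
      _ ≤ ∫ a in 𝒜, M * (|Real.exp (v a) - Real.exp (u a)| / Zv + Real.exp (u a) * c) := by
          refine setIntegral_mono_on
            (hint _ (M * (Real.exp M * ε / Zv + Real.exp M * c))
              (hu.abs.mul (hρmeas.sub hπmeas).abs) ?_)
            (((hintabsdiff.div_const Zv).add (hintexpu.mul_const c)).const_mul M) hm ?_
          · intro a ha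
            rw [abs_mul, abs_abs, abs_abs, ← abs_mul]
            refine (hpt a ha).trans ?_
            refine mul_le_mul_of_nonneg_left
              (add_le_add ((div_le_div_iff_of_pos_right hZv0).2 (hexpdiff a ha))
                (mul_le_mul_of_nonneg_right (hexpu_ub a ha) hc0)) hM0
          · intro a ha
            rw [show |u a| * |ρ a - π a| = |u a * (ρ a - π a)| from (abs_mul _ _).symm]
            exact hpt a ha
      _ = M * ((∫ a in 𝒜, |Real.exp (v a) - Real.exp (u a)|) / Zv + Zu * c) := by
          rw [integral_const_mul, integral_add (hintabsdiff.div_const Zv)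
            (hintexpu.mul_const c), integral_div, integral_mul_const, ← hZu]
      _ ≤ 2 * M * Real.exp (2 * M) * ε := by
          have h1 : Zu * c = |Zv - Zu| / Zv := by
            rw [hc]
            field_simp
          rw [h1, ← add_div]
          have hnum : (∫ a in 𝒜, |Real.exp (v a) - Real.exp (u a)|) + |Zv - Zu|
              ≤ 2 * (A * (Real.exp M * ε)) := by linarith
          have hdd : ((∫ a in 𝒜, |Real.exp (v a) - Real.exp (u a)|) + |Zv - Zu|) / Zv
              ≤ 2 * (A * (Real.exp M * ε)) / (A * Real.exp (-M)) :=
            div_le_div₀ (by positivity) hnum (by positivity) hZv_lb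
          have hval : 2 * (A * (Real.exp M * ε)) / (A * Real.exp (-M))
              = 2 * Real.exp (2 * M) * ε := by
            rw [Real.exp_neg, show Real.exp (2 * M) = Real.exp M * Real.exp M by
              rw [← Real.exp_add]; ring_nf]
            field_simp
          calc M * (((∫ a in 𝒜, |Real.exp (v a) - Real.exp (u a)|) + |Zv - Zu|) / Zv)
              ≤ M * (2 * Real.exp (2 * M) * ε) := by
                refine mul_le_mul_of_nonneg_left (hdd.trans_eq hval) hM0
            _ = 2 * M * Real.exp (2 * M) * ε := by ring
  -- combine
  obtain ⟨c1, c2⟩ := abs_le.1 habs1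
  obtain ⟨d1, d2⟩ := abs_le.1 habs2
  obtain ⟨e1, e2⟩ := abs_le.1 habs3
  rw [abs_le]
  constructor <;> linarith


theorem stmt11 {m d : ℕ}
    (𝒜 : Set (EuclideanSpace ℝ (Fin m)))
    (h𝒜 : IsCompact 𝒜) (h𝒜0 : 0 < volume 𝒜) (h𝒜fin : volume 𝒜 < ⊤)
    (γ C B R : ℝ) (hγ : 0 < γ) (hC : 0 < C) (hB : 0 < B) (hR : 0 < R)
    (f g : EuclideanSpace ℝ (Fin m) → EuclideanSpace ℝ (Fin d))
    (r : EuclideanSpace ℝ (Fin m) → ℝ)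
    (hf : Measurable f) (hg : Measurable g) (hr : Measurable r)
    (hfB : ∀ a ∈ 𝒜, ‖f a‖ ≤ B) (hgB : ∀ a ∈ 𝒜, ‖g a‖ ≤ B)
    (hrR : ∀ a ∈ 𝒜, |r a| ≤ R)
    (z' : EuclideanSpace ℝ (Fin d)) (hz' : ‖z'‖ ≤ C) :
    γ * |(∫ a in 𝒜, Real.log (gibbs 𝒜 γ g r z' a) * gibbs 𝒜 γ g r z' a) -
          ∫ a in 𝒜, Real.log (gibbs 𝒜 γ f r z' a) * gibbs 𝒜 γ f r z' a| ≤
      2 * (1 + (B * C + R) / γ * Real.exp (2 * (B * C + R) / γ)) *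
        sSup ((fun a => |⟪f a - g a, z'⟫|) '' 𝒜) := by
  have hm : MeasurableSet 𝒜 := h𝒜.measurableSet
  obtain ⟨a0, ha0⟩ : 𝒜.Nonempty := by
    by_contra h
    rw [Set.not_nonempty_iff_eq_empty] at h
    simp [h] at h𝒜0
  set S := sSup ((fun a => |⟪f a - g a, z'⟫|) '' 𝒜) with hS
  have hbdd : BddAbove ((fun a => |⟪f a - g a, z'⟫|) '' 𝒜) := by
    refine ⟨2 * B * C, ?_⟩
    rintro x ⟨a, ha, rfl⟩
    calc |⟪f a - g a, z'⟫| ≤ ‖f a - g a‖ * ‖z'‖ := abs_real_inner_le_norm _ _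
      _ ≤ (B + B) * C := mul_le_mul ((norm_sub_le _ _).trans
          (add_le_add (hfB a ha) (hgB a ha))) hz' (norm_nonneg _) (by positivity)
      _ = 2 * B * C := by ring
  have hSle : ∀ a ∈ 𝒜, |⟪f a - g a, z'⟫| ≤ S := fun a ha => le_csSup hbdd ⟨a, ha, rfl⟩
  have hS0 : 0 ≤ S := (abs_nonneg _).trans (hSle a0 ha0)
  have hub : ∀ a ∈ 𝒜, |(⟪f a, z'⟫ + r a) / γ| ≤ (B * C + R) / γ := by
    intro a ha
    rw [abs_div, abs_of_pos hγ]
    refine (div_le_div_iff_of_pos_right hγ).2 ?_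
    refine (abs_add_le _ _).trans (add_le_add ?_ (hrR a ha))
    calc |⟪f a, z'⟫| ≤ ‖f a‖ * ‖z'‖ := abs_real_inner_le_norm _ _
      _ ≤ B * C := mul_le_mul (hfB a ha) hz' (norm_nonneg _) hB.le
  have hvb : ∀ a ∈ 𝒜, |(⟪g a, z'⟫ + r a) / γ| ≤ (B * C + R) / γ := by
    intro a ha
    rw [abs_div, abs_of_pos hγ]
    refine (div_le_div_iff_of_pos_right hγ).2 ?_
    refine (abs_add_le _ _).trans (add_le_add ?_ (hrR a ha))
    calc |⟪g a, z'⟫| ≤ ‖g a‖ * ‖z'‖ := abs_real_inner_le_norm _ _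
      _ ≤ B * C := mul_le_mul (hgB a ha) hz' (norm_nonneg _) hB.le
  have huv : ∀ a ∈ 𝒜, |(⟪f a, z'⟫ + r a) / γ - (⟪g a, z'⟫ + r a) / γ| ≤ S / γ := by
    intro a ha
    have hid : (⟪f a, z'⟫ + r a) / γ - (⟪g a, z'⟫ + r a) / γ = ⟪f a - g a, z'⟫ / γ := by
      rw [inner_sub_left]
      ring
    rw [hid, abs_div, abs_of_pos hγ]
    exact (div_le_div_iff_of_pos_right hγ).2 (hSle a ha)
  have key := entropy_diff 𝒜 hm h𝒜0 h𝒜fin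
    (fun a => (⟪f a, z'⟫ + r a) / γ) (fun a => (⟪g a, z'⟫ + r a) / γ)
    (((hf.inner measurable_const).add hr).div_const γ)
    (((hg.inner measurable_const).add hr).div_const γ)
    ((B * C + R) / γ) (S / γ) hub hvb huv
  simp only [gibbs]
  calc γ * |(∫ a in 𝒜, Real.log (Real.exp ((⟪g a, z'⟫ + r a) / γ) /
            ∫ a' in 𝒜, Real.exp ((⟪g a', z'⟫ + r a') / γ)) *
          (Real.exp ((⟪g a, z'⟫ + r a) / γ) /
            ∫ a' in 𝒜, Real.exp ((⟪g a', z'⟫ + r a') / γ))) -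
        ∫ a in 𝒜, Real.log (Real.exp ((⟪f a, z'⟫ + r a) / γ) /
            ∫ a' in 𝒜, Real.exp ((⟪f a', z'⟫ + r a') / γ)) *
          (Real.exp ((⟪f a, z'⟫ + r a) / γ) /
            ∫ a' in 𝒜, Real.exp ((⟪f a', z'⟫ + r a') / γ))|
      ≤ γ * (2 * (S / γ) + 2 * ((B * C + R) / γ) *
          Real.exp (2 * ((B * C + R) / γ)) * (S / γ)) :=
        mul_le_mul_of_nonneg_left key hγ.le
    _ = 2 * (1 + (B * C + R) / γ * Real.exp (2 * (B * C + R) / γ)) * S := by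
        rw [show 2 * ((B * C + R) / γ) = 2 * (B * C + R) / γ by ring]
        field_simp
end
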